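/- arXiv:2207.02237 — 2 statements merged into one kernel-verified Lean document; each statement's English description precedes it below -/
import Mathlib

section
/- Probabilistic past cone via an auxiliary distribution: for 0 < P ≤ 1 and p ∈ Δ_d sorted non-increasingly, define p̃ by p̃_1 = P·p_1 + (1−P) and p̃_i = P·p_i for i ≥ 2. Then p̃ is a probability vector sorted non-increasingly, and for any q ∈ Δ_d, the condition P ≤ (1 − Q_k)/(1 − P_k) for all k ∈ {1,…,d−1} (where P_k, Q_k are the cumulative sums of sorted p, q) holds if and only if p̃ majorises q. -/
open Finset

/-- Partial sum of the first `k` entries of `p`. -/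
noncomputable def psum {d : ℕ} (p : Fin d → ℝ) (k : ℕ) : ℝ :=
  ∑ i ∈ Finset.univ.filter (fun i : Fin d => (i : ℕ) < k), p i

/-- The vector `p` rearranged in non-increasing order. -/
noncomputable def sortDesc {d : ℕ} (p : Fin d → ℝ) : Fin d → ℝ :=
  fun i => p (Tuple.sort p i.rev)

/-- `p` is a probability vector. -/
def IsProbVec {d : ℕ} (p : Fin d → ℝ) : Prop :=
  (∀ i, 0 ≤ p i) ∧ ∑ i, p i = 1

/-- The auxiliary distribution `p̃` for the probabilistic past cone:
`p̃₁ = P·p₁ + (1−P)` and `p̃ᵢ = P·pᵢ` for `i ≥ 2`. -/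
noncomputable def pTilde {d : ℕ} (P : ℝ) (p : Fin d → ℝ) : Fin d → ℝ :=
  fun i => if (i : ℕ) = 0 then P * p i + (1 - P) else P * p i

lemma psum_zero' {d : ℕ} (p : Fin d → ℝ) : psum p 0 = 0 := by
  simp [psum]

lemma psum_top {d : ℕ} (p : Fin d → ℝ) : psum p d = ∑ i, p i := by
  unfold psum
  rw [Finset.filter_true_of_mem (fun i _ => i.isLt)]

lemma sum_sortDesc {d : ℕ} (q : Fin d → ℝ) : ∑ i, sortDesc q i = ∑ i, q i := by
  unfold sortDesc
  exact Equiv.sum_comp (Fin.revPerm.trans (Tuple.sort q)) q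

lemma pTilde_eq {d : ℕ} (P : ℝ) (p : Fin d → ℝ) (i : Fin d) :
    pTilde P p i = P * p i + (if (i : ℕ) = 0 then 1 - P else 0) := by
  unfold pTilde; split_ifs <;> ring

lemma sum_ind {d : ℕ} (hd : 1 ≤ d) (c : ℝ) (s : Finset (Fin d))
    (h0 : (⟨0, hd⟩ : Fin d) ∈ s) :
    ∑ i ∈ s, (if (i : ℕ) = 0 then c else 0) = c := by
  rw [Finset.sum_eq_single_of_mem (⟨0, hd⟩ : Fin d) h0]
  · simp
  · intro b _ hb
    have : (b : ℕ) ≠ 0 := fun h => hb (Fin.ext h)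
    simp [this]

lemma psum_pTilde {d : ℕ} (hd : 1 ≤ d) (P : ℝ) (p : Fin d → ℝ) {k : ℕ} (hk : 1 ≤ k) :
    psum (pTilde P p) k = P * psum p k + (1 - P) := by
  unfold psum
  have : ∀ i ∈ Finset.univ.filter (fun i : Fin d => (i : ℕ) < k),
      pTilde P p i = P * p i + (if (i : ℕ) = 0 then 1 - P else 0) :=
    fun i _ => pTilde_eq P p i
  rw [Finset.sum_congr rfl this, Finset.sum_add_distrib, ← Finset.mul_sum,
    sum_ind hd (1 - P) _ (by simp [Finset.mem_filter]; omega)]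

/-- for `0 < P ≤ 1` and `p` sorted non-increasingly, `p̃` is a probability
vector sorted non-increasingly, and for any `q ∈ Δ_d`, the condition
`P(1 − P_k) ≤ 1 − Q_k` for all `k ∈ {1,…,d−1}` holds iff `p̃` majorises `q`. -/
theorem probabilistic_past_aux {d : ℕ} (hd : 1 ≤ d) (P : ℝ) (hP0 : 0 < P) (hP1 : P ≤ 1)
    (p : Fin d → ℝ) (hp : IsProbVec p) (hsort : ∀ i j : Fin d, i ≤ j → p j ≤ p i) :
    IsProbVec (pTilde P p) ∧
      (∀ i j : Fin d, i ≤ j → pTilde P p j ≤ pTilde P p i) ∧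
      (∀ q : Fin d → ℝ, IsProbVec q →
        ((∀ k, 1 ≤ k → k ≤ d - 1 → P * (1 - psum p k) ≤ 1 - psum (sortDesc q) k) ↔
          ∀ k ≤ d, psum (sortDesc q) k ≤ psum (pTilde P p) k)) := by
  have hpsum : ∑ i, p i = 1 := hp.2
  have hsum_tilde : ∑ i, pTilde P p i = 1 := by
    have h1 : ∑ i, pTilde P p i = psum (pTilde P p) d := (psum_top _).symm
    rw [h1, psum_pTilde hd P p hd, psum_top, hpsum]; ring
  refine ⟨⟨?_, hsum_tilde⟩, ?_, ?_⟩
  · intro i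
    have := hp.1 i
    unfold pTilde
    split_ifs <;> nlinarith
  · intro i j hij
    have hij' : (i : ℕ) ≤ (j : ℕ) := hij
    have hps : p j ≤ p i := hsort i j hij
    unfold pTilde
    split_ifs with h1 h2 h2 <;> first | nlinarith | omega
  · intro q hq
    have hQtop : psum (sortDesc q) d = 1 := by
      rw [psum_top, sum_sortDesc, hq.2]
    constructor
    · intro h k hk
      rcases Nat.eq_zero_or_pos k with rfl | hk1
      · simp [psum_zero']
      rcases eq_or_lt_of_le hk with rfl | hklt
      · rw [hQtop, psum_top, hsum_tilde]
      · have hk2 : k ≤ d - 1 := by omega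
        have := h k hk1 hk2
        rw [psum_pTilde hd P p hk1]
        linarith
    · intro h k hk1 hk2
      have hkd : k ≤ d := by omega
      have := h k hkd
      rw [psum_pTilde hd P p hk1] at this
      linarith
end

section
/- Passive state is minimal among its permutations under thermomajorisation at β=0 (majorisation): for any p ∈ Δ_d and any permutation σ, the permuted vector σ·p majorises p and is majorised by p (they are equal as multisets), hence T_+(σ·p) = T_+(p); however for β > 0 and Gibbs state γ with strictly decreasing entries, the maximally active arrangement p_max (entries of p sorted in increasing order against decreasing γ, i.e., anti-ordered) thermomajorises every other permutation of p: for all σ ∈ S_d, p_max ≻_β σ·p. -/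
open Finset

/-- The vector `p` rearranged in non-decreasing order (maximally active arrangement:
largest population on the level with smallest Gibbs weight). -/
noncomputable def sortAsc {d : ℕ} (p : Fin d → ℝ) : Fin d → ℝ :=
  fun i => p (Tuple.sort p i)

/-- Thermomajorisation relative to the Gibbs distribution `γ`, via the standard
equivalent characterisation: `p ≻_β q` iff `‖q − tγ‖₁ ≤ ‖p − tγ‖₁` for all `t ∈ ℝ`
(equivalently, the thermomajorisation curve of `p` lies on or above that of `q`). -/
def ThermoMajorizes {d : ℕ} (γ p q : Fin d → ℝ) : Prop :=
  ∀ t : ℝ, ∑ i, |q i - t * γ i| ≤ ∑ i, |p i - t * γ i|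

section Aux

open Equiv Equiv.Perm Function

/-- Generic rearrangement inequality for a supermodular cost `C`. -/
theorem sum_C_comp_perm_le_sum_C {ι : Type*} [DecidableEq ι] {C : ℝ → ℝ → ℝ}
    (hC : ∀ x₁ x₂ y₁ y₂ : ℝ, x₁ ≤ x₂ → y₁ ≤ y₂ → C x₂ y₁ + C x₁ y₂ ≤ C x₂ y₂ + C x₁ y₁)
    {s : Finset ι} {σ : Perm ι} {f g : ι → ℝ} (hfg : MonovaryOn f g s)
    (hσ : {x | σ x ≠ x} ⊆ s) :
    ∑ i ∈ s, C (f i) (g (σ i)) ≤ ∑ i ∈ s, C (f i) (g i) := by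
  classical
  revert hσ σ hfg
  apply Finset.induction_on_max_value (fun i ↦ toLex (g i, f i))
    (motive := fun t ↦ ∀ {σ : Perm ι}, MonovaryOn f g t → {x | σ x ≠ x} ⊆ t →
      ∑ i ∈ t, C (f i) (g (σ i)) ≤ ∑ i ∈ t, C (f i) (g i)) s
  · simp only [le_rfl, Finset.sum_empty, imp_true_iff]
  intro a s has hamax hind σ hfg hσ
  set τ : Perm ι := σ.trans (swap a (σ a)) with hτ
  have hτs : {x | τ x ≠ x} ⊆ s := by
    intro x hx
    simp only [τ, Ne, Set.mem_setOf_eq, Equiv.coe_trans, Equiv.swap_comp_apply] at hx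
    split_ifs at hx with h₁ h₂
    · obtain rfl | hax := eq_or_ne x a
      · contradiction
      · exact mem_of_mem_insert_of_ne (hσ fun h ↦ hax <| h.symm.trans h₁) hax
    · exact (hx <| σ.injective h₂.symm).elim
    · exact mem_of_mem_insert_of_ne (hσ hx) (ne_of_apply_ne _ h₂)
  specialize hind (hfg.subset <| subset_insert _ _) hτs
  simp_rw [sum_insert has]
  refine le_trans ?_ (add_le_add_right hind _)
  obtain hσa | hσa := eq_or_ne a (σ a)
  · rw [hτ, ← hσa, swap_self, trans_refl]
  have h1s : σ⁻¹ a ∈ s := by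
    rw [Ne, ← inv_eq_iff_eq] at hσa
    refine mem_of_mem_insert_of_ne (hσ fun h ↦ hσa ?_) hσa
    rwa [(show ∀ x, σ (σ⁻¹ x) = x from fun x => σ.apply_symm_apply x), eq_comm] at h
  simp only [← s.sum_erase_add _ h1s, add_comm]
  rw [← add_assoc, ← add_assoc]
  simp only [hτ, swap_apply_left, Function.comp_apply, Equiv.coe_trans, (show ∀ x, σ (σ⁻¹ x) = x from fun x => σ.apply_symm_apply x)]
  refine add_le_add (hC _ _ _ _ ?_ ?_) (sum_congr rfl fun x hx ↦ ?_).le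
  · specialize hamax (σ⁻¹ a) h1s
    rw [Prod.Lex.le_iff] at hamax
    cases' hamax with hamax hamax
    · exact hfg (mem_insert_of_mem h1s) (mem_insert_self _ _) hamax
    · exact hamax.2
  · specialize hamax (σ a) (mem_of_mem_insert_of_ne (hσ <| σ.injective.ne hσa.symm) hσa.symm)
    rw [Prod.Lex.le_iff] at hamax
    cases' hamax with hamax hamax
    · exact hamax.le
    · exact hamax.1.le
  · rw [mem_erase, Ne, eq_inv_iff_eq] at hx
    rw [swap_apply_of_ne_of_ne hx.1 (σ.injective.ne _)]
    rintro rfl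
    exact has hx.2

theorem abs_supermod {a₁ a₂ b₁ b₂ : ℝ} (ha : a₁ ≤ a₂) (hb : b₁ ≤ b₂) :
    |a₂ + b₁| + |a₁ + b₂| ≤ |a₁ + b₁| + |a₂ + b₂| := by
  rcases abs_cases (a₂ + b₁) with ⟨e1, s1⟩ | ⟨e1, s1⟩ <;>
  rcases abs_cases (a₁ + b₂) with ⟨e2, s2⟩ | ⟨e2, s2⟩ <;>
  rcases abs_cases (a₁ + b₁) with ⟨e3, s3⟩ | ⟨e3, s3⟩ <;>
  rcases abs_cases (a₂ + b₂) with ⟨e4, s4⟩ | ⟨e4, s4⟩ <;>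
  linarith

end Aux

/-- for a Gibbs state `γ` with strictly decreasing positive entries, the
maximally active arrangement of `p` thermomajorises every permutation of `p`, and every
permutation of `p` thermomajorises the passive arrangement. -/
theorem active_passive_extremal {d : ℕ} (γ p : Fin d → ℝ)
    (hγpos : ∀ i, 0 < γ i) (hγdec : ∀ i j : Fin d, i < j → γ j < γ i)
    (hγsum : ∑ i, γ i = 1) (hp : IsProbVec p) :
    ∀ σ : Equiv.Perm (Fin d),
      ThermoMajorizes γ (sortAsc p) (p ∘ σ) ∧ ThermoMajorizes γ (p ∘ σ) (sortDesc p) := by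
  intro σ
  have hmono : Monotone (sortAsc p) := Tuple.monotone_sort p
  have hanti : Antitone (sortDesc p) := by
    intro i j hij
    exact Tuple.monotone_sort p (Fin.rev_le_rev.mpr hij)
  -- the equal-multiset facts
  have hAsc : ∀ i, sortAsc p ((σ.trans (Tuple.sort p).symm) i) = p (σ i) := by
    intro i; simp [sortAsc]
  have hDesc : ∀ i, sortDesc p ((σ.trans ((Tuple.sort p).symm.trans Fin.revPerm)) i) = p (σ i) := by
    intro i; simp [sortDesc]
  constructor
  · -- sortAsc thermomajorises p ∘ σ
    intro t
    rcases le_or_gt 0 t with ht | ht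
    · have hfg : MonovaryOn (fun i => -(γ i)) (sortAsc p) (univ : Finset (Fin d)) := by
        intro i _ j _ hg
        have hij : i < j := by
          by_contra h
          exact absurd (hmono (le_of_not_gt h)) (not_le.2 hg)
        exact neg_le_neg (hγdec i j hij).le
      have hC : ∀ x₁ x₂ y₁ y₂ : ℝ, x₁ ≤ x₂ → y₁ ≤ y₂ →
          |y₁ + t * x₂| + |y₂ + t * x₁| ≤ |y₂ + t * x₂| + |y₁ + t * x₁| := by
        intro x₁ x₂ y₁ y₂ hx hy
        have h := abs_supermod (mul_le_mul_of_nonneg_left hx ht) hy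
        rw [add_comm (t * x₂) y₁, add_comm (t * x₁) y₂, add_comm (t * x₁) y₁,
          add_comm (t * x₂) y₂] at h
        linarith
      have key := sum_C_comp_perm_le_sum_C (C := fun x y => |y + t * x|) hC hfg
        (σ := σ.trans (Tuple.sort p).symm) (fun x _ => Finset.mem_coe.2 (mem_univ x))
      simp only [hAsc, mul_neg, ← sub_eq_add_neg] at key
      simpa using key
    · -- t < 0 : both sides equal 1 - t
      have key : ∀ q : Fin d → ℝ, (∀ i, 0 ≤ q i) → (∑ i, q i = 1) →
          ∑ i, |q i - t * γ i| = 1 - t := by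
        intro q hq hqs
        have habs : ∀ i ∈ (univ : Finset (Fin d)), |q i - t * γ i| = q i - t * γ i := by
          intro i _; exact abs_of_nonneg (by nlinarith [hγpos i, hq i])
        rw [Finset.sum_congr rfl habs, Finset.sum_sub_distrib, ← Finset.mul_sum, hγsum,
          mul_one, hqs]
      rw [key (p ∘ σ) (fun i => hp.1 _) (by rw [Function.comp_def, Equiv.sum_comp σ p, hp.2]),
        key (sortAsc p) (fun i => hp.1 _)
          (by simpa [sortAsc] using (Equiv.sum_comp (Tuple.sort p) p).trans hp.2)]
  · -- p ∘ σ thermomajorises sortDesc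
    intro t
    rcases le_or_gt 0 t with ht | ht
    · have hfg : MonovaryOn γ (sortDesc p) (univ : Finset (Fin d)) := by
        intro i _ j _ hg
        have hij : j < i := by
          by_contra h
          exact absurd (hanti (le_of_not_gt h)) (not_le.2 hg)
        exact (hγdec j i hij).le
      have hC : ∀ x₁ x₂ y₁ y₂ : ℝ, x₁ ≤ x₂ → y₁ ≤ y₂ →
          -|y₁ - t * x₂| + -|y₂ - t * x₁| ≤ -|y₂ - t * x₂| + -|y₁ - t * x₁| := by
        intro x₁ x₂ y₁ y₂ hx hy
        have h := abs_supermod (neg_le_neg (mul_le_mul_of_nonneg_left hx ht)) hy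
        rw [show -(t * x₁) + y₁ = y₁ - t * x₁ by ring, show -(t * x₂) + y₂ = y₂ - t * x₂ by ring,
          show -(t * x₂) + y₁ = y₁ - t * x₂ by ring, show -(t * x₁) + y₂ = y₂ - t * x₁ by ring] at h
        linarith
      have key := sum_C_comp_perm_le_sum_C (C := fun x y => -|y - t * x|) hC hfg
        (σ := σ.trans ((Tuple.sort p).symm.trans Fin.revPerm))
        (fun x _ => Finset.mem_coe.2 (mem_univ x))
      simp only [hDesc] at key
      have key2 : ∑ i, |sortDesc p i - t * γ i| ≤ ∑ i, |p (σ i) - t * γ i| := by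
        have h1 : -∑ i, |p (σ i) - t * γ i| ≤ -∑ i, |sortDesc p i - t * γ i| := by
          simpa [Finset.sum_neg_distrib] using key
        linarith
      simpa using key2
    · have key : ∀ q : Fin d → ℝ, (∀ i, 0 ≤ q i) → (∑ i, q i = 1) →
          ∑ i, |q i - t * γ i| = 1 - t := by
        intro q hq hqs
        have habs : ∀ i ∈ (univ : Finset (Fin d)), |q i - t * γ i| = q i - t * γ i := by
          intro i _; exact abs_of_nonneg (by nlinarith [hγpos i, hq i])
        rw [Finset.sum_congr rfl habs, Finset.sum_sub_distrib, ← Finset.mul_sum, hγsum,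
          mul_one, hqs]
      rw [key (p ∘ σ) (fun i => hp.1 _) (by rw [Function.comp_def, Equiv.sum_comp σ p, hp.2]),
        key (sortDesc p) (fun i => hp.1 _)
          (by simpa [sortDesc] using
            (Equiv.sum_comp (Fin.revPerm.trans (Tuple.sort p)) p).trans hp.2)]
end
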